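/- The interval matrix 𝐀 = 𝐀^∀ + 𝐀^∃ (square, size n) is NOT AE regular if and only if there exists A^∀ ∈ 𝐀^∀ such that for every vertex matrix A^∃_v of 𝐀^∃ there exists a vector x_v ∈ ℝⁿ with (A^∀ + A^∃_v)x_v = 0 and ‖x_v‖ ≠ 0 (normalizable so that some linear functional in [−e,e]ᵀ gives value 1). -/

import Mathlib

open Matrix

lemma row_update_combo {n : ℕ} (r : Fin n → ℝ) (j : Fin n) (a b t : ℝ) :
    Function.update r j (t * a + (1 - t) * b)
      = t • Function.update r j a + (1 - t) • Function.update r j b := by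
  funext k
  by_cases h : k = j <;> simp [Function.update_apply, h] <;> ring

lemma entry_update {n : ℕ} (B : Matrix (Fin n) (Fin n) ℝ) (i j : Fin n) (v : ℝ)
    (i' j' : Fin n) :
    (B.updateRow i (Function.update (B i) j v)) i' j'
      = if i' = i ∧ j' = j then v else B i' j' := by
  rw [Matrix.updateRow_apply]
  by_cases hi : i' = i
  · subst hi
    by_cases hj : j' = j <;> simp [Function.update_apply, hj]
  · simp [hi]

lemma key {n : ℕ} (L U : Matrix (Fin n) (Fin n) ℝ)
    (hv : ∀ B : Matrix (Fin n) (Fin n) ℝ,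
      (∀ i j, B i j = L i j ∨ B i j = U i j) → B.det = 0) :
    ∀ B : Matrix (Fin n) (Fin n) ℝ,
      (∀ i j, L i j ≤ B i j ∧ B i j ≤ U i j) → B.det = 0 := by
  suffices H : ∀ S : Finset (Fin n × Fin n), ∀ B : Matrix (Fin n) (Fin n) ℝ,
      (∀ p : Fin n × Fin n, p ∈ S → L p.1 p.2 ≤ B p.1 p.2 ∧ B p.1 p.2 ≤ U p.1 p.2) →
      (∀ p : Fin n × Fin n, p ∉ S → B p.1 p.2 = L p.1 p.2 ∨ B p.1 p.2 = U p.1 p.2) →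
      B.det = 0 by
    intro B hB
    exact H Finset.univ B (fun p _ => hB p.1 p.2) (fun p hp => absurd (Finset.mem_univ p) hp)
  intro S
  induction S using Finset.induction with
  | empty =>
    intro B _ h2
    exact hv B (fun i j => h2 (i, j) (by simp))
  | @insert p S hp ih =>
    obtain ⟨i, j⟩ := p
    intro B h1 h2
    have hc := h1 (i, j) (Finset.mem_insert_self _ _)
    set BL := B.updateRow i (Function.update (B i) j (L i j)) with hBLdef
    set BU := B.updateRow i (Function.update (B i) j (U i j)) with hBUdef
    have hdiff : ∀ p' : Fin n × Fin n, p' ∈ S → ¬(p'.1 = i ∧ p'.2 = j) := by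
      rintro ⟨a, b⟩ hmem ⟨rfl, rfl⟩
      exact hp hmem
    have hL1 : ∀ p' : Fin n × Fin n, p' ∈ S →
        L p'.1 p'.2 ≤ BL p'.1 p'.2 ∧ BL p'.1 p'.2 ≤ U p'.1 p'.2 := by
      intro p' hmem
      rw [hBLdef, entry_update, if_neg (hdiff p' hmem)]
      exact h1 p' (Finset.mem_insert_of_mem hmem)
    have hU1 : ∀ p' : Fin n × Fin n, p' ∈ S →
        L p'.1 p'.2 ≤ BU p'.1 p'.2 ∧ BU p'.1 p'.2 ≤ U p'.1 p'.2 := by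
      intro p' hmem
      rw [hBUdef, entry_update, if_neg (hdiff p' hmem)]
      exact h1 p' (Finset.mem_insert_of_mem hmem)
    have hL2 : ∀ p' : Fin n × Fin n, p' ∉ S →
        BL p'.1 p'.2 = L p'.1 p'.2 ∨ BL p'.1 p'.2 = U p'.1 p'.2 := by
      rintro ⟨a, b⟩ hmem
      rw [hBLdef, entry_update]
      by_cases hab : a = i ∧ b = j
      · rw [if_pos hab]; obtain ⟨rfl, rfl⟩ := hab; exact Or.inl rfl
      · rw [if_neg hab]
        refine h2 (a, b) ?_
        simp only [Finset.mem_insert]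
        rintro (heq | hmem')
        · exact hab ⟨congrArg Prod.fst heq, congrArg Prod.snd heq⟩
        · exact hmem hmem'
    have hU2 : ∀ p' : Fin n × Fin n, p' ∉ S →
        BU p'.1 p'.2 = L p'.1 p'.2 ∨ BU p'.1 p'.2 = U p'.1 p'.2 := by
      rintro ⟨a, b⟩ hmem
      rw [hBUdef, entry_update]
      by_cases hab : a = i ∧ b = j
      · rw [if_pos hab]; obtain ⟨rfl, rfl⟩ := hab; exact Or.inr rfl
      · rw [if_neg hab]
        refine h2 (a, b) ?_
        simp only [Finset.mem_insert]
        rintro (heq | hmem')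
        · exact hab ⟨congrArg Prod.fst heq, congrArg Prod.snd heq⟩
        · exact hmem hmem'
    have hdL : BL.det = 0 := ih BL hL1 hL2
    have hdU : BU.det = 0 := ih BU hU1 hU2
    by_cases hLU : U i j = L i j
    · have : B = BL := by
        funext a b
        rw [hBLdef, entry_update]
        by_cases hab : a = i ∧ b = j
        · rw [if_pos hab]; obtain ⟨rfl, rfl⟩ := hab
          have := hc.1; have := hc.2; linarith [hLU.ge]
        · rw [if_neg hab]
      rw [this]; exact hdL
    · have hne : U i j - L i j ≠ 0 := sub_ne_zero.mpr hLU
      set t := (U i j - B i j) / (U i j - L i j) with htdef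
      have ht : t * L i j + (1 - t) * U i j = B i j := by
        rw [htdef]
        have hinv : (U i j - L i j) * (U i j - L i j)⁻¹ = 1 := mul_inv_cancel₀ hne
        linear_combination (-(U i j - B i j)) * hinv
      have hB : B = B.updateRow i (Function.update (B i) j (B i j)) := by
        simp
      rw [hB, ← ht, row_update_combo, Matrix.det_updateRow_add,
        Matrix.det_updateRow_smul, Matrix.det_updateRow_smul, hdL, hdU]
      ring

/-- `𝐀 = 𝐀^∀ + 𝐀^∃` is not AE regular iff there is `A^∀ ∈ 𝐀^∀` such that every
vertex matrix `A^∃_v` of `𝐀^∃` admits a nonzero vector `x_v` with `(A^∀ + A^∃_v) x_v = 0`. -/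
theorem not_aeRegular_iff {n : ℕ} (LA UA LE UE : Matrix (Fin n) (Fin n) ℝ)
    (hA : ∀ i j, LA i j ≤ UA i j) (hE : ∀ i j, LE i j ≤ UE i j) :
    (¬ ∀ Af : Matrix (Fin n) (Fin n) ℝ,
        (∀ i j, LA i j ≤ Af i j ∧ Af i j ≤ UA i j) →
        ∃ Ae : Matrix (Fin n) (Fin n) ℝ,
          (∀ i j, LE i j ≤ Ae i j ∧ Ae i j ≤ UE i j) ∧ (Af + Ae).det ≠ 0) ↔
    (∃ Af : Matrix (Fin n) (Fin n) ℝ,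
        (∀ i j, LA i j ≤ Af i j ∧ Af i j ≤ UA i j) ∧
        ∀ Ae : Matrix (Fin n) (Fin n) ℝ,
          (∀ i j, Ae i j = LE i j ∨ Ae i j = UE i j) →
          ∃ x : Fin n → ℝ, x ≠ 0 ∧ (Af + Ae).mulVec x = 0) := by
  constructor
  · intro h
    push_neg at h
    obtain ⟨Af, hAf, hdet⟩ := h
    refine ⟨Af, hAf, ?_⟩
    intro Ae hAe
    have hin : ∀ i j, LE i j ≤ Ae i j ∧ Ae i j ≤ UE i j := by
      intro i j
      rcases hAe i j with h' | h' <;> rw [h']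
      · exact ⟨le_refl _, hE i j⟩
      · exact ⟨hE i j, le_refl _⟩
    have hd : (Af + Ae).det = 0 := hdet Ae hin
    obtain ⟨v, hv, hmv⟩ := (Matrix.exists_mulVec_eq_zero_iff).mpr hd
    exact ⟨v, hv, hmv⟩
  · rintro ⟨Af, hAf, hker⟩ h
    obtain ⟨Ae, hAe, hdet⟩ := h Af hAf
    apply hdet
    apply key (Af + LE) (Af + UE)
    · intro B hB
      set Ae' := B - Af with hAe'
      have hB' : B = Af + Ae' := by simp [hAe']
      have hvert : ∀ i j, Ae' i j = LE i j ∨ Ae' i j = UE i j := by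
        intro i j
        rcases hB i j with h' | h' <;>
          [left; right] <;>
          simp only [hAe', Matrix.sub_apply] <;>
          simp only [Matrix.add_apply] at h' <;> linarith
      obtain ⟨x, hx, hmv⟩ := hker Ae' hvert
      rw [hB']
      exact Matrix.exists_mulVec_eq_zero_iff.mp ⟨x, hx, hmv⟩
    · intro i j
      simp only [Matrix.add_apply]
      have := hAe i j
      constructor <;> linarith [this.1, this.2]
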